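/- Let b̃ be the unique minimizer of min_{0 ≤ b ≤ C} (1/2)b'(I+O)b - v'b and let γ̃ = ∑_i b̃_i. Then b̃ = clip(v - γ̃·1), where clip applies t ↦ max(0, min(C, t)) entrywise. -/
import Mathlib

open Matrix Finset

noncomputable def pimat (k : ℕ) : Matrix (Fin (k-1)) (Fin k) ℝ :=
  Matrix.of fun i j => if (j : ℕ) = 0 then 1 else if (j : ℕ) = (i : ℕ) + 1 then -1 else 0

noncomputable def Pmat (k : ℕ) (y : Fin k) : Matrix (Fin k) (Fin k) ℝ :=
  Matrix.of fun i j =>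
    if (i : ℕ) = 0 then (if j = y then 1 else 0)
    else if i = y then (if (j : ℕ) = 0 then 1 else 0)
    else (if j = i then 1 else 0)

noncomputable def Theta (k : ℕ) : Matrix (Fin (k-1)) (Fin (k-1)) ℝ :=
  1 + Matrix.of fun _ _ => 1

noncomputable def qform (k : ℕ) (v b : Fin (k-1) → ℝ) : ℝ :=
  (1/2) * (b ⬝ᵥ (Theta k *ᵥ b)) - v ⬝ᵥ b

lemma qform_eq (k : ℕ) (v b : Fin (k-1) → ℝ) :
    qform k v b = (1/2) * ((∑ j, b j * b j) + (∑ j, b j) * (∑ j, b j)) - ∑ j, v j * b j := by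
  unfold qform Theta
  rw [Matrix.add_mulVec, Matrix.one_mulVec]
  simp only [dotProduct, mulVec, Matrix.of_apply, Pi.add_apply]
  simp only [one_mul]
  rw [Finset.sum_congr rfl (fun x _ => by rw [mul_add]), Finset.sum_add_distrib,
    ← Finset.sum_mul]

lemma sum_update (k : ℕ) (b : Fin (k-1) → ℝ) (i : Fin (k-1)) (t : ℝ)
    (F : Fin (k-1) → ℝ → ℝ) :
    ∑ j, F j (Function.update b i t j) = ∑ j, F j (b j) - F i (b i) + F i t := by
  have h : (fun j => F j (Function.update b i t j)) =
      Function.update (fun j => F j (b j)) i (F i t) := by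
    funext j
    rcases eq_or_ne j i with rfl | hj
    · simp
    · simp [Function.update_of_ne hj]
  rw [h, Finset.sum_update_of_mem (Finset.mem_univ i)]
  rw [show (Finset.univ : Finset (Fin (k-1))) \ {i} = Finset.univ.erase i by
    ext; simp [and_comm]]
  rw [Finset.sum_erase_eq_sub (Finset.mem_univ i)]
  ring

theorem stmt6 (k : ℕ) (hk : 2 ≤ k) (C : ℝ) (hC : 0 < C) (v b : Fin (k-1) → ℝ)
    (hfeas : ∀ i, b i ∈ Set.Icc 0 C)
    (hmin : ∀ b', (∀ i, b' i ∈ Set.Icc 0 C) → qform k v b ≤ qform k v b') :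
    ∀ i, b i = max 0 (min C (v i - ∑ j, b j)) := by
  intro i
  set γ := ∑ j, b j with hγ
  have hkey : ∀ t, 0 ≤ t → t ≤ C → 0 ≤ (t - b i) * (t + γ - v i) := by
    intro t ht0 htC
    have hfeas' : ∀ j, Function.update b i t j ∈ Set.Icc (0:ℝ) C := by
      intro j
      rcases eq_or_ne j i with rfl | hj
      · simp [ht0, htC]
      · simp [Function.update_of_ne hj, hfeas j]
    have hm := hmin _ hfeas'
    have e1 := qform_eq k v b
    have e2 := qform_eq k v (Function.update b i t)
    rw [sum_update k b i t (fun j x => x * x),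
        sum_update k b i t (fun j x => x),
        sum_update k b i t (fun j x => v j * x)] at e2
    rw [e1, e2] at hm
    nlinarith [hm]
  obtain ⟨ha0, haC⟩ := hfeas i
  set a := b i with ha
  set d := v i - γ with hd
  rcases le_or_gt d 0 with h | h
  · have haz : a = 0 := by
      by_contra hne
      have hpos : 0 < a := lt_of_le_of_ne ha0 (Ne.symm hne)
      have := hkey (a/2) (by linarith) (by linarith)
      nlinarith
    rw [haz, min_eq_right (by linarith), max_eq_left h]
  · rcases le_or_gt d C with h2 | h2
    · have := hkey ((a+d)/2) (by linarith) (by linarith)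
      have had : a = d := by nlinarith
      rw [had, min_eq_right h2, max_eq_right h.le]
    · have haC' : a = C := by
        by_contra hne
        have hlt : a < C := lt_of_le_of_ne haC hne
        have := hkey ((a+C)/2) (by linarith) (by linarith)
        nlinarith
      rw [haC', min_eq_left h2.le, max_eq_right hC.le]
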